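/- Let β > 0 be a real number such that sup_{t ≥ 0} 2·Φ(β·t)·e^{-t²/2} > 1. Then there exists k₀ ∈ ℕ such that for every natural number k ≥ k₀, ∫_{0}^{∞} (2·Φ(β·t)·e^{-t²/2})^{k} dt ≥ √(2πk) · k². -/

import Mathlib

open MeasureTheory

/-- `Phi t` is the probability that a standard Gaussian random variable has
absolute value at most `t`. -/
noncomputable def Phi (t : ℝ) : ℝ :=
  (1 / Real.sqrt (2 * Real.pi)) * ∫ x in (-t)..t, Real.exp (-x ^ 2 / 2)

lemma continuous_Phi : Continuous Phi := by
  unfold Phi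
  refine continuous_const.mul ?_
  have hint : ∀ a b : ℝ, IntervalIntegrable (fun x => Real.exp (-x ^ 2 / 2)) volume a b :=
    fun a b => (Continuous.intervalIntegrable (by continuity) a b)
  have h1 : Continuous fun t : ℝ => ∫ x in (0:ℝ)..t, Real.exp (-x ^ 2 / 2) :=
    intervalIntegral.continuous_primitive hint 0
  have heq : (fun t : ℝ => ∫ x in (-t)..t, Real.exp (-x ^ 2 / 2)) =
      fun t => (∫ x in (0:ℝ)..t, Real.exp (-x ^ 2 / 2))
        - ∫ x in (0:ℝ)..(-t), Real.exp (-x ^ 2 / 2) := by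
    funext t
    rw [← intervalIntegral.integral_add_adjacent_intervals (a := -t) (b := 0) (c := t)
      (hint _ _) (hint _ _), intervalIntegral.integral_symm]
    ring
  rw [heq]
  exact h1.sub (h1.comp continuous_neg)

lemma Phi_nonneg {t : ℝ} (ht : 0 ≤ t) : 0 ≤ Phi t := by
  unfold Phi
  apply mul_nonneg
  · positivity
  · apply intervalIntegral.integral_nonneg (by linarith)
    intro x _
    positivity

lemma integrable_gauss : Integrable (fun x : ℝ => Real.exp (-x ^ 2 / 2)) := by
  have : (fun x : ℝ => Real.exp (-x ^ 2 / 2)) = fun x => Real.exp (-(1/2) * x ^ 2) := by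
    funext x; ring_nf
  rw [this]
  exact integrable_exp_neg_mul_sq (by norm_num)

lemma Phi_le_one (t : ℝ) : Phi t ≤ 1 := by
  unfold Phi
  have hsqrt : 0 < Real.sqrt (2 * Real.pi) := Real.sqrt_pos.2 (by positivity)
  rcases le_total t 0 with h | h
  · have : ∫ x in (-t)..t, Real.exp (-x ^ 2 / 2) ≤ 0 := by
      rw [intervalIntegral.integral_symm]
      simp only [neg_nonpos]
      apply intervalIntegral.integral_nonneg (by linarith)
      intro x _; positivity
    calc (1 / Real.sqrt (2 * Real.pi)) * ∫ x in (-t)..t, Real.exp (-x ^ 2 / 2)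
        ≤ 0 := mul_nonpos_of_nonneg_of_nonpos (by positivity) this
      _ ≤ 1 := zero_le_one
  · have hle : ∫ x in (-t)..t, Real.exp (-x ^ 2 / 2) ≤ Real.sqrt (2 * Real.pi) := by
      have h1 : ∫ x in (-t)..t, Real.exp (-x ^ 2 / 2)
          = ∫ x in Set.Ioc (-t) t, Real.exp (-x ^ 2 / 2) := by
        rw [intervalIntegral.integral_of_le (by linarith)]
      have h2 : ∫ x in Set.Ioc (-t) t, Real.exp (-x ^ 2 / 2)
          ≤ ∫ x : ℝ, Real.exp (-x ^ 2 / 2) := by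
        apply setIntegral_le_integral integrable_gauss
        filter_upwards with x; positivity
      have h3 : ∫ x : ℝ, Real.exp (-x ^ 2 / 2) = Real.sqrt (2 * Real.pi) := by
        have : (fun x : ℝ => Real.exp (-x ^ 2 / 2)) = fun x => Real.exp (-(1/2) * x ^ 2) := by
          funext x; ring_nf
        rw [this, integral_gaussian]
        rw [div_div_eq_mul_div, mul_comm, mul_div_assoc]
        norm_num
      rw [h1, ← h3]; exact h2
    calc (1 / Real.sqrt (2 * Real.pi)) * ∫ x in (-t)..t, Real.exp (-x ^ 2 / 2)
        ≤ (1 / Real.sqrt (2 * Real.pi)) * Real.sqrt (2 * Real.pi) := by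
          apply mul_le_mul_of_nonneg_left hle (by positivity)
      _ = 1 := by field_simp

theorem integral_h_pow_large (β : ℝ) (hβ : 0 < β)
    (hg : 1 < sSup ((fun t : ℝ => 2 * Phi (β * t) * Real.exp (-t ^ 2 / 2)) ''
      Set.Ici 0)) :
    ∃ k₀ : ℕ, ∀ k : ℕ, k₀ ≤ k →
      Real.sqrt (2 * Real.pi * k) * k ^ 2
        ≤ ∫ t in Set.Ioi (0 : ℝ), (2 * Phi (β * t) * Real.exp (-t ^ 2 / 2)) ^ k := by
  set h : ℝ → ℝ := fun t => 2 * Phi (β * t) * Real.exp (-t ^ 2 / 2) with hh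
  have hcont : Continuous h := by
    apply Continuous.mul
    · exact continuous_const.mul (continuous_Phi.comp (continuous_const.mul continuous_id))
    · exact Real.continuous_exp.comp (by continuity)
  -- find t₀ ≥ 0 with h t₀ > 1
  obtain ⟨y, hy, hy1⟩ := exists_lt_of_lt_csSup (Set.Nonempty.image _ ⟨0, le_refl 0⟩) hg
  obtain ⟨t₀, ht₀, rfl⟩ := hy
  set c : ℝ := (1 + h t₀) / 2 with hc
  have hc1 : 1 < c := by simp only [hc]; linarith
  have hct : c < h t₀ := by simp only [hc]; linarith
  -- find δ > 0 with h > c on ball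
  have : {t : ℝ | c < h t} ∈ nhds t₀ := (isOpen_lt continuous_const hcont).mem_nhds hct
  obtain ⟨δ, hδ, hball⟩ := Metric.mem_nhds_iff.1 this
  set S : Set ℝ := Set.Ioo t₀ (t₀ + δ / 2) with hS
  have hSsub : S ⊆ Set.Ioi (0 : ℝ) := fun x hx => lt_of_le_of_lt ht₀ hx.1
  have hSc : ∀ x ∈ S, c < h x := by
    intro x hx
    apply hball
    rw [Metric.mem_ball, Real.dist_eq, abs_of_nonneg (by linarith [hx.1.le])]
    have := hx.2; linarith
  -- nonnegativity and bound of h on Ioi 0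
  have hnn : ∀ t ∈ Set.Ioi (0:ℝ), 0 ≤ h t := by
    intro t ht
    have ht' : 0 < t := ht
    exact mul_nonneg (mul_nonneg zero_le_two (Phi_nonneg (by positivity))) (Real.exp_nonneg _)
  have hbd : ∀ t : ℝ, t ∈ Set.Ioi (0:ℝ) → h t ≤ 2 * Real.exp (-t ^ 2 / 2) := by
    intro t ht
    have := Phi_le_one (β * t)
    have hexp : (0:ℝ) ≤ Real.exp (-t ^ 2 / 2) := Real.exp_nonneg _
    calc 2 * Phi (β * t) * Real.exp (-t ^ 2 / 2) ≤ 2 * 1 * Real.exp (-t ^ 2 / 2) := by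
          apply mul_le_mul_of_nonneg_right _ hexp
          linarith
      _ = 2 * Real.exp (-t ^ 2 / 2) := by ring
  -- integrability of h^k on Ioi 0 for k ≥ 1
  have hint : ∀ k : ℕ, 1 ≤ k → IntegrableOn (fun t => h t ^ k) (Set.Ioi (0:ℝ)) := by
    intro k hk
    apply Integrable.mono' ((integrable_gauss.const_mul (2^k)).restrict)
      ((hcont.pow k).aestronglyMeasurable.restrict)
    rw [ae_restrict_iff' measurableSet_Ioi]
    filter_upwards with t ht
    have h0 := hnn t ht
    have h1 := hbd t ht
    rw [Real.norm_eq_abs, Pi.pow_apply, abs_of_nonneg (pow_nonneg h0 k)]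
    calc h t ^ k ≤ (2 * Real.exp (-t ^ 2 / 2)) ^ k := pow_le_pow_left₀ h0 h1 k
      _ = 2 ^ k * Real.exp (-t ^ 2 / 2) ^ k := by rw [mul_pow]
      _ ≤ 2 ^ k * Real.exp (-t ^ 2 / 2) := by
          apply mul_le_mul_of_nonneg_left _ (by positivity)
          apply pow_le_of_le_one (Real.exp_nonneg _) _ (by omega)
          rw [Real.exp_le_one_iff]
          have : (0:ℝ) < t := ht
          nlinarith
  -- key lower bound on the integral
  have hlow : ∀ k : ℕ, 1 ≤ k → (δ / 2) * c ^ k ≤ ∫ t in Set.Ioi (0:ℝ), h t ^ k := by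
    intro k hk
    have hmeasS : MeasurableSet S := measurableSet_Ioo
    have h1 : ∫ t in S, (c ^ k) ≤ ∫ t in S, h t ^ k := by
      apply setIntegral_mono_on (integrableOn_const measure_Ioo_lt_top.ne enorm_ne_top)
        ((hint k hk).mono_set hSsub) hmeasS
      intro x hx
      exact pow_le_pow_left₀ (by linarith [hc1]) (hSc x hx).le k
    have h2 : ∫ t in S, (c ^ k : ℝ) = (δ / 2) * c ^ k := by
      rw [setIntegral_const, smul_eq_mul, hS, measureReal_def, Real.volume_Ioo]
      have he : t₀ + δ / 2 - t₀ = δ / 2 := by ring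
      rw [he, ENNReal.toReal_ofReal (by linarith)]
    have h3 : ∫ t in S, h t ^ k ≤ ∫ t in Set.Ioi (0:ℝ), h t ^ k := by
      apply setIntegral_mono_set (hint k hk)
      · filter_upwards [ae_restrict_mem measurableSet_Ioi] with t ht
        exact pow_nonneg (hnn t ht) k
      · exact Filter.Eventually.of_forall hSsub
    linarith [h1, h2.symm.le]
  -- asymptotics: eventually √(2πk) k² ≤ (δ/2) c^k
  have htend : Filter.Tendsto (fun k : ℕ => (k : ℝ) ^ 3 / c ^ k) Filter.atTop (nhds 0) :=
    tendsto_pow_const_div_const_pow_of_one_lt 3 hc1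
  have hεpos : (0:ℝ) < (δ / 2) / Real.sqrt (2 * Real.pi) := by positivity
  have := htend.eventually (gt_mem_nhds hεpos)
  rw [Filter.eventually_atTop] at this
  obtain ⟨N, hN⟩ := this
  refine ⟨max N 1, fun k hk => ?_⟩
  have hk1 : 1 ≤ k := le_trans (le_max_right N 1) hk
  have hkN : N ≤ k := le_trans (le_max_left N 1) hk
  have hkey := hN k hkN
  have hck : (0:ℝ) < c ^ k := pow_pos (by linarith) k
  have hsq : Real.sqrt (2 * Real.pi) > 0 := Real.sqrt_pos.2 (by positivity)
  have h5 : (k:ℝ) ^ 3 * Real.sqrt (2 * Real.pi) ≤ (δ / 2) * c ^ k := by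
    rw [div_lt_div_iff₀ hck hsq] at hkey
    nlinarith [hkey]
  have h6 : Real.sqrt (2 * Real.pi * k) * k ^ 2 ≤ (k:ℝ) ^ 3 * Real.sqrt (2 * Real.pi) := by
    have hk0 : (1:ℝ) ≤ (k:ℝ) := by exact_mod_cast hk1
    have : Real.sqrt (2 * Real.pi * k) = Real.sqrt (2 * Real.pi) * Real.sqrt k := by
      rw [Real.sqrt_mul (by positivity)]
    rw [this]
    have hsk : Real.sqrt k ≤ (k:ℝ) := by
      calc Real.sqrt k ≤ Real.sqrt ((k:ℝ)^2) := by
            apply Real.sqrt_le_sqrt; nlinarith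
        _ = (k:ℝ) := by rw [Real.sqrt_sq (by positivity)]
    calc Real.sqrt (2 * Real.pi) * Real.sqrt k * k ^ 2
        ≤ Real.sqrt (2 * Real.pi) * (k:ℝ) * k ^ 2 := by
          apply mul_le_mul_of_nonneg_right (mul_le_mul_of_nonneg_left hsk hsq.le) (by positivity)
      _ = (k:ℝ) ^ 3 * Real.sqrt (2 * Real.pi) := by ring
  calc Real.sqrt (2 * Real.pi * k) * k ^ 2 ≤ (k:ℝ) ^ 3 * Real.sqrt (2 * Real.pi) := h6
    _ ≤ (δ / 2) * c ^ k := h5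
    _ ≤ ∫ t in Set.Ioi (0:ℝ), h t ^ k := hlow k hk1
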